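/- Let f, g : 2^ω → ℝ be Baire 1 functions. Then f ≤_tt1 g if and only if |f|_α ≤ |g|_α. -/

import Mathlib

/-- Cantor space `2^ω`. -/
abbrev Cantor : Type := ℕ → Bool

/-- A bit `b` is a correct answer to the question `f A ≲_ε p`. -/
def CorrectAnswer (f : Cantor → ℝ) (A : Cantor) (p ε : ℚ) (b : Bool) : Prop :=
  (b = true ∧ f A < (p : ℝ) + (ε : ℝ)) ∨ (b = false ∧ (p : ℝ) - (ε : ℝ) < f A)

/-- Topological m-reducibility `f ≤_m g`. -/
def MReducible (f g : Cantor → ℝ) : Prop :=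
  ∀ p ε : ℚ, 0 < ε → ∃ q δ : ℚ, 0 < δ ∧ ∃ k : Cantor → Cantor, Continuous k ∧
    ∀ A b, CorrectAnswer g (k A) q δ b → CorrectAnswer f A p ε b

/-- `f` is Baire class 1: a pointwise limit of continuous functions. -/
def BaireOne (f : Cantor → ℝ) : Prop :=
  ∃ F : ℕ → Cantor → ℝ, (∀ n, Continuous (F n)) ∧
    ∀ A, Filter.Tendsto (fun n => F n A) Filter.atTop (nhds (f A))

/-- The Bourgain derivation sequence `P^ν_{f,p,ε}`. -/
noncomputable def derivSeq (f : Cantor → ℝ) (p ε : ℚ) (ν : Ordinal.{0}) : Set Cantor :=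
  Ordinal.limitRecOn ν Set.univ
    (fun _ P => P \ ⋃₀ {U : Set Cantor | IsOpen U ∧
        (f '' (P ∩ U) ⊆ Set.Iio ((p : ℝ) + (ε : ℝ)) ∨
         f '' (P ∩ U) ⊆ Set.Ioi ((p : ℝ) - (ε : ℝ)))})
    (fun o _ ih => ⋂ (μ : {μ : Ordinal.{0} // μ < o}), ih μ.1 μ.2)

/-- `α(f,p,ε)`: the least ordinal `ν` with `P^ν_{f,p,ε} = ∅`. -/
noncomputable def bAlpha (f : Cantor → ℝ) (p ε : ℚ) : Ordinal.{0} :=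
  sInf {ν | derivSeq f p ε ν = ∅}

/-- The Bourgain rank `|f|_α`. -/
noncomputable def bourgainRank (f : Cantor → ℝ) : Ordinal.{0} :=
  ⨆ x : ℚ × {ε : ℚ // 0 < ε}, bAlpha f x.1 x.2.1

/-- Topological `tt1`-reducibility: one oracle question about `g`, together with the
first `r` bits of the input, determine the answer via a truth table. -/
def TT1Reducible (f g : Cantor → ℝ) : Prop :=
  ∀ p ε : ℚ, 0 < ε → ∃ (k : Cantor → Cantor) (q δ : ℚ) (r : ℕ)
    (h : (Fin r → Bool) → Bool → Bool),
    Continuous k ∧ 0 < δ ∧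
    ∀ (A : Cantor) (b : Bool), CorrectAnswer g (k A) q δ b →
      CorrectAnswer f A p ε (h (fun i : Fin r => A i) b)

open Set

noncomputable section

/-! ### Cylinders -/

def cyl (x : Cantor) (n : ℕ) : Set Cantor := {B | ∀ i < n, B i = x i}

lemma mem_cyl_self (x : Cantor) (n : ℕ) : x ∈ cyl x n := fun _ _ => rfl

lemma cyl_anti {x : Cantor} {n m : ℕ} (h : n ≤ m) : cyl x m ⊆ cyl x n :=
  fun _ hB i hi => hB i (lt_of_lt_of_le hi h)

lemma cyl_eq_of_mem {x A : Cantor} {n : ℕ} (hA : A ∈ cyl x n) : cyl A n = cyl x n := by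
  ext B; constructor <;> intro hB i hi
  · rw [hB i hi]; exact hA i hi
  · rw [hB i hi, hA i hi]

lemma isOpen_cyl (x : Cantor) (n : ℕ) : IsOpen (cyl x n) := by
  have : cyl x n = ⋂ i ∈ Finset.range n, {B : Cantor | B i = x i} := by
    ext B; simp [cyl]
  rw [this]
  refine isOpen_biInter_finset fun i _ => ?_
  have : {B : Cantor | B i = x i} = (fun B : Cantor => B i) ⁻¹' {x i} := rfl
  rw [this]
  exact (continuous_apply i).isOpen_preimage _ (isOpen_discrete _)

lemma isClosed_cyl (x : Cantor) (n : ℕ) : IsClosed (cyl x n) := by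
  have : cyl x n = ⋂ i ∈ Finset.range n, {B : Cantor | B i = x i} := by
    ext B; simp [cyl]
  rw [this]
  refine isClosed_biInter fun i _ => ?_
  have : {B : Cantor | B i = x i} = (fun B : Cantor => B i) ⁻¹' {x i} := rfl
  rw [this]
  exact IsClosed.preimage (continuous_apply i) (isClosed_discrete _)

lemma isClopen_cyl (x : Cantor) (n : ℕ) : IsClopen (cyl x n) :=
  ⟨isClosed_cyl x n, isOpen_cyl x n⟩

lemma exists_cyl_subset {U : Set Cantor} (hU : IsOpen U) {x : Cantor} (hx : x ∈ U) :
    ∃ n, cyl x n ⊆ U := by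
  obtain ⟨I, u, hu, hsub⟩ := isOpen_pi_iff.mp hU x hx
  refine ⟨(I.sup id) + 1, fun B hB => hsub ?_⟩
  intro i hi
  have : B i = x i := hB i (Nat.lt_succ_of_le (Finset.le_sup (f := id) hi))
  rw [this]; exact (hu i hi).2

lemma continuousAt_of_cyl {k : Cantor → Cantor} {a : Cantor}
    (h : ∀ M, ∃ N, ∀ B ∈ cyl a N, k B ∈ cyl (k a) M) : ContinuousAt k a := by
  intro V hV
  rw [Filter.mem_map]
  obtain ⟨U, hUV, hUo, hkU⟩ := mem_nhds_iff.mp hV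
  obtain ⟨M, hM⟩ := exists_cyl_subset hUo hkU
  obtain ⟨N, hN⟩ := h M
  refine Filter.mem_of_superset ((isOpen_cyl a N).mem_nhds (mem_cyl_self a N)) ?_
  exact fun B hB => hUV (hM (hN B hB))

/-! ### derivSeq basics -/

variable {f g : Cantor → ℝ} {p ε q δ : ℚ}

def oneSided (f : Cantor → ℝ) (p ε : ℚ) (S : Set Cantor) : Prop :=
  f '' S ⊆ Set.Iio ((p : ℝ) + (ε : ℝ)) ∨ f '' S ⊆ Set.Ioi ((p : ℝ) - (ε : ℝ))

lemma derivSeq_zero : derivSeq f p ε 0 = univ := Ordinal.limitRecOn_zero _ _ _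

lemma derivSeq_succ (μ : Ordinal) :
    derivSeq f p ε (Order.succ μ) = derivSeq f p ε μ \
      ⋃₀ {U : Set Cantor | IsOpen U ∧ oneSided f p ε (derivSeq f p ε μ ∩ U)} :=
  Ordinal.limitRecOn_succ _ _ _ _

lemma derivSeq_limit {o : Ordinal} (ho : Order.IsSuccLimit o) :
    derivSeq f p ε o = ⋂ (μ : {μ : Ordinal // μ < o}), derivSeq f p ε μ.1 :=
  Ordinal.limitRecOn_limit _ _ _ _ ho

lemma isClosed_derivSeq (μ : Ordinal) : IsClosed (derivSeq f p ε μ) := by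
  induction μ using Ordinal.induction with
  | _ μ IH =>
    rcases Ordinal.zero_or_succ_or_isSuccLimit μ with h | ⟨ν, rfl⟩ | h
    · rw [h, derivSeq_zero]; exact isClosed_univ
    · rw [derivSeq_succ]
      exact (IH ν (Order.lt_succ ν)).sdiff (isOpen_sUnion fun U hU => hU.1)
    · rw [derivSeq_limit h]
      exact isClosed_iInter fun μ' => IH μ'.1 μ'.2

lemma derivSeq_antitone : ∀ {μ ν : Ordinal}, μ ≤ ν → derivSeq f p ε ν ⊆ derivSeq f p ε μ := by
  intro μ ν
  induction ν using Ordinal.induction with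
  | _ ν IH =>
    intro hμν
    rcases eq_or_lt_of_le hμν with rfl | hlt
    · exact subset_rfl
    rcases Ordinal.zero_or_succ_or_isSuccLimit ν with h | ⟨ν', rfl⟩ | h
    · exact absurd (h ▸ hlt) (not_lt_zero (a := μ))
    · calc derivSeq f p ε (Order.succ ν') ⊆ derivSeq f p ε ν' := by
            rw [derivSeq_succ]; exact diff_subset
        _ ⊆ derivSeq f p ε μ := IH ν' (Order.lt_succ ν') (Order.lt_succ_iff.mp hlt)
    · rw [derivSeq_limit h]
      exact iInter_subset_of_subset ⟨μ, hlt⟩ subset_rfl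

lemma mem_derivSeq_succ_iff {x : Cantor} {μ : Ordinal} :
    x ∈ derivSeq f p ε (Order.succ μ) ↔ x ∈ derivSeq f p ε μ ∧
      ∀ U : Set Cantor, IsOpen U → x ∈ U → ¬ oneSided f p ε (derivSeq f p ε μ ∩ U) := by
  rw [derivSeq_succ, mem_diff, mem_sUnion]
  simp only [not_exists, mem_setOf_eq]
  constructor
  · rintro ⟨h1, h2⟩
    exact ⟨h1, fun U hUo hxU hone => h2 U ⟨⟨hUo, hone⟩, hxU⟩⟩
  · rintro ⟨h1, h2⟩
    exact ⟨h1, fun U hU => h2 U hU.1.1 hU.2 hU.1.2⟩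

lemma derivSeq_neg (μ : Ordinal) :
    derivSeq (fun A => -(g A)) (-q) δ μ = derivSeq g q δ μ := by
  induction μ using Ordinal.induction with
  | _ μ IH =>
    rcases Ordinal.zero_or_succ_or_isSuccLimit μ with h | ⟨ν, rfl⟩ | h
    · rw [h, derivSeq_zero, derivSeq_zero]
    · rw [derivSeq_succ, derivSeq_succ, IH ν (Order.lt_succ ν)]
      congr 1
      apply congrArg
      ext U
      simp only [mem_setOf_eq, and_congr_right_iff]
      intro _
      unfold oneSided
      push_cast
      constructor
      · rintro (h | h)
        · right; rintro v ⟨A, hA, rfl⟩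
          have := h ⟨A, hA, rfl⟩
          simp only [mem_Iio] at this
          simp only [mem_Ioi]; linarith
        · left; rintro v ⟨A, hA, rfl⟩
          have := h ⟨A, hA, rfl⟩
          simp only [mem_Ioi] at this
          simp only [mem_Iio]; linarith
      · rintro (h | h)
        · right; rintro v ⟨A, hA, rfl⟩
          have := h ⟨A, hA, rfl⟩
          simp only [mem_Iio] at this
          simp only [mem_Ioi]; linarith
        · left; rintro v ⟨A, hA, rfl⟩
          have := h ⟨A, hA, rfl⟩
          simp only [mem_Ioi] at this
          simp only [mem_Iio]; linarith
    · rw [derivSeq_limit h, derivSeq_limit h]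
      exact iInter_congr fun μ' => IH μ'.1 μ'.2

/-! ### Termination of the derivation for Baire class 1 functions -/

instance : Nonempty Cantor := ⟨fun _ => false⟩

lemma derivSeq_strict {f : Cantor → ℝ} {p ε : ℚ} (hf : BaireOne f) (hε : 0 < ε)
    (ν : Ordinal) (hne : (derivSeq f p ε ν).Nonempty) :
    ∃ x ∈ derivSeq f p ε ν, x ∉ derivSeq f p ε (Order.succ ν) := by
  classical
  obtain ⟨F, hFc, hFt⟩ := hf
  set P := derivSeq f p ε ν with hP
  have hPc : IsClosed P := isClosed_derivSeq ν
  haveI : CompactSpace ↥P := isCompact_iff_compactSpace.mp hPc.isCompact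
  haveI : LocallyCompactSpace ↥P := WeaklyLocallyCompactSpace.locallyCompactSpace
  haveI : Nonempty ↥P := hne.to_subtype
  set S : ℕ × Bool → Set ↥P := fun nb =>
    {x | ∀ m, nb.1 ≤ m → (if nb.2 then F m x.1 ≤ (p : ℝ) + ε / 2
      else (p : ℝ) - ε / 2 ≤ F m x.1)} with hS
  have hSclosed : ∀ nb, IsClosed (S nb) := by
    rintro ⟨n, b⟩
    have : S (n, b) = ⋂ m, {x : ↥P | n ≤ m → (if b then F m x.1 ≤ (p : ℝ) + ε / 2
        else (p : ℝ) - ε / 2 ≤ F m x.1)} := by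
      ext x
      rw [Set.mem_iInter]
      exact Iff.rfl
    rw [this]
    refine isClosed_iInter fun m => ?_
    by_cases hm : n ≤ m
    · have heq : {x : ↥P | n ≤ m → (if b then F m x.1 ≤ (p : ℝ) + ε / 2
          else (p : ℝ) - ε / 2 ≤ F m x.1)} = {x : ↥P | (if b then F m x.1 ≤ (p : ℝ) + ε / 2
          else (p : ℝ) - ε / 2 ≤ F m x.1)} := by
        ext x
        simp only [Set.mem_setOf_eq, eq_true hm, true_implies]
      rw [heq]
      cases b
      · simp only [Bool.false_eq_true, if_false]
        exact isClosed_le continuous_const ((hFc m).comp continuous_subtype_val)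
      · simp only [if_true]
        exact isClosed_le ((hFc m).comp continuous_subtype_val) continuous_const
    · have heq : {x : ↥P | n ≤ m → (if b then F m x.1 ≤ (p : ℝ) + ε / 2
          else (p : ℝ) - ε / 2 ≤ F m x.1)} = Set.univ := by
        ext x
        simp only [Set.mem_setOf_eq, Set.mem_univ, iff_true]
        intro hc
        exact absurd hc hm
      rw [heq]
      exact isClosed_univ
  have hScover : ⋃ nb, S nb = Set.univ := by
    refine Set.eq_univ_of_forall fun x => Set.mem_iUnion.mpr ?_
    rcases le_or_gt (f x.1) (p : ℝ) with h | h
    · have hev : ∀ᶠ m in Filter.atTop, F m x.1 < (p : ℝ) + ε / 2 := by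
        refine (hFt x.1).eventually_lt_const ?_
        have : (0 : ℝ) < (ε : ℝ) / 2 := by positivity
        linarith
      obtain ⟨n, hn⟩ := Filter.eventually_atTop.mp hev
      exact ⟨(n, true), fun m hm => by simp [le_of_lt (hn m hm)]⟩
    · have hev : ∀ᶠ m in Filter.atTop, (p : ℝ) - ε / 2 < F m x.1 := by
        refine (hFt x.1).eventually_const_lt ?_
        have : (0 : ℝ) < (ε : ℝ) / 2 := by positivity
        linarith
      obtain ⟨n, hn⟩ := Filter.eventually_atTop.mp hev
      exact ⟨(n, false), fun m hm => by simp [le_of_lt (hn m hm)]⟩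
  obtain ⟨nb, x, hx⟩ := nonempty_interior_of_iUnion_of_closed hSclosed hScover
  obtain ⟨t, hts, hto, hxt⟩ := mem_interior.mp hx
  obtain ⟨V, hVo, hVt⟩ := isOpen_induced_iff.mp hto
  refine ⟨x.1, x.2, ?_⟩
  intro hmem
  have hone : oneSided f p ε (P ∩ V) := by
    rcases nb with ⟨n, b⟩
    cases b
    · right
      rintro v ⟨A, hA, rfl⟩
      have hmemS : (⟨A, hA.1⟩ : ↥P) ∈ S (n, false) := hts (by rw [← hVt]; exact hA.2)
      have hle : (p : ℝ) - ε / 2 ≤ f A := by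
        refine ge_of_tendsto (hFt A) ?_
        refine Filter.eventually_atTop.mpr ⟨n, fun m hm => ?_⟩
        simpa using hmemS m hm
      have : (0 : ℝ) < (ε : ℝ) / 2 := by positivity
      simp only [Set.mem_Ioi]; push_cast; linarith
    · left
      rintro v ⟨A, hA, rfl⟩
      have hmemS : (⟨A, hA.1⟩ : ↥P) ∈ S (n, true) := hts (by rw [← hVt]; exact hA.2)
      have hle : f A ≤ (p : ℝ) + ε / 2 := by
        refine le_of_tendsto (hFt A) ?_
        refine Filter.eventually_atTop.mpr ⟨n, fun m hm => ?_⟩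
        simpa using hmemS m hm
      have : (0 : ℝ) < (ε : ℝ) / 2 := by positivity
      simp only [Set.mem_Iio]; push_cast; linarith
  have hxV : x.1 ∈ V := by
    have : x ∈ Subtype.val ⁻¹' V := by rw [hVt]; exact hxt
    exact this
  exact (mem_derivSeq_succ_iff.mp hmem).2 V hVo hxV hone

lemma exists_derivSeq_empty {f : Cantor → ℝ} {p ε : ℚ} (hf : BaireOne f) (hε : 0 < ε) :
    ∃ ν, derivSeq f p ε ν = ∅ := by
  by_contra hcon
  push_neg at hcon
  have hne : ∀ ν, (derivSeq f p ε ν).Nonempty := hcon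
  have hw : ∀ ν : Ordinal.{0}, ∃ x ∈ derivSeq f p ε ν, x ∉ derivSeq f p ε (Order.succ ν) :=
    fun ν => derivSeq_strict hf hε ν (hne ν)
  choose w hw1 hw2 using hw
  have hinj : Function.Injective w := by
    intro ν μ heq
    by_contra hne'
    rcases lt_or_gt_of_ne hne' with hlt | hlt
    · exact hw2 ν (heq ▸ derivSeq_antitone (Order.succ_le_of_lt hlt) (hw1 μ))
    · exact hw2 μ (heq ▸ derivSeq_antitone (Order.succ_le_of_lt hlt) (hw1 ν))
  set c := Cardinal.mk Cantor with hc
  set o := (Order.succ c).ord with ho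
  have hinj2 : Function.Injective (fun i : o.ToType => w ((Ordinal.ToType.mk (o := o)).symm i).1) := by
    intro i j hij
    have := hinj hij
    have h2 : ((Ordinal.ToType.mk (o := o)).symm i) = ((Ordinal.ToType.mk (o := o)).symm j) :=
      Subtype.ext this
    exact (Ordinal.ToType.mk (o := o)).symm.injective h2
  have hle : Cardinal.mk o.ToType ≤ c := Cardinal.mk_le_of_injective hinj2
  rw [Cardinal.mk_toType, ho, Cardinal.card_ord] at hle
  exact (Order.lt_succ c).not_ge hle

lemma derivSeq_bAlpha_empty {f : Cantor → ℝ} {p ε : ℚ} (hf : BaireOne f) (hε : 0 < ε) :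
    derivSeq f p ε (bAlpha f p ε) = ∅ :=
  csInf_mem (s := {ν | derivSeq f p ε ν = ∅}) (exists_derivSeq_empty hf hε)

lemma bAlpha_le_of_empty {f : Cantor → ℝ} {p ε : ℚ} {μ : Ordinal}
    (h : derivSeq f p ε μ = ∅) : bAlpha f p ε ≤ μ :=
  csInf_le' h

lemma derivSeq_nonempty_of_lt_bAlpha {f : Cantor → ℝ} {p ε : ℚ} {μ : Ordinal}
    (h : μ < bAlpha f p ε) : (derivSeq f p ε μ).Nonempty := by
  by_contra hcon
  have := bAlpha_le_of_empty (f := f) (p := p) (ε := ε) (μ := μ)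
    (Set.not_nonempty_iff_eq_empty.mp hcon)
  exact absurd this (not_le.mpr h)

lemma derivSeq_limit_nonempty {f : Cantor → ℝ} {p ε : ℚ} {l : Ordinal} (hlim : Order.IsSuccLimit l)
    (hne : ∀ μ < l, (derivSeq f p ε μ).Nonempty) : (derivSeq f p ε l).Nonempty := by
  rw [derivSeq_limit hlim]
  haveI : Nonempty {μ : Ordinal // μ < l} := ⟨⟨0, hlim.pos⟩⟩
  refine IsCompact.nonempty_iInter_of_directed_nonempty_isCompact_isClosed _ ?_
    (fun μ => hne μ.1 μ.2) (fun μ => (isClosed_derivSeq μ.1).isCompact)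
    (fun μ => isClosed_derivSeq μ.1)
  intro μ₁ μ₂
  refine ⟨⟨max μ₁.1 μ₂.1, max_lt μ₁.2 μ₂.2⟩, ?_, ?_⟩
  · exact derivSeq_antitone (le_max_left _ _)
  · exact derivSeq_antitone (le_max_right _ _)

lemma bAlpha_is_succ {f : Cantor → ℝ} {p ε : ℚ} (hf : BaireOne f) (hε : 0 < ε) :
    ∃ β, bAlpha f p ε = Order.succ β := by
  rcases Ordinal.zero_or_succ_or_isSuccLimit (bAlpha f p ε) with h | h | h
  · exfalso
    have := derivSeq_bAlpha_empty (p := p) hf hε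
    rw [h, derivSeq_zero] at this
    exact Set.univ_nonempty.ne_empty this
  · obtain ⟨β, hβ⟩ := h; exact ⟨β, hβ.symm⟩
  · exfalso
    have hne : ∀ μ < bAlpha f p ε, (derivSeq f p ε μ).Nonempty :=
      fun μ hμ => derivSeq_nonempty_of_lt_bAlpha hμ
    have := derivSeq_limit_nonempty h hne
    exact this.ne_empty (derivSeq_bAlpha_empty hf hε)

lemma one_le_bAlpha {f : Cantor → ℝ} {p ε : ℚ} (hf : BaireOne f) (hε : 0 < ε) :
    1 ≤ bAlpha f p ε := by
  by_contra hcon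
  have h0 : bAlpha f p ε = 0 := Ordinal.lt_one_iff_zero.mp (not_le.mp hcon)
  have := derivSeq_bAlpha_empty (p := p) hf hε
  rw [h0, derivSeq_zero] at this
  exact Set.univ_nonempty.ne_empty this

/-! ### Forward direction -/

def fin2cantor {r : ℕ} (σ : Fin r → Bool) : Cantor :=
  fun m => if h : m < r then σ ⟨m, h⟩ else false

lemma cylFin_eq {r : ℕ} (σ : Fin r → Bool) :
    {B : Cantor | ∀ i : Fin r, B i = σ i} = cyl (fin2cantor σ) r := by
  ext B
  constructor
  · intro hB i hi
    have := hB ⟨i, hi⟩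
    simp [fin2cantor, hi, this]
  · intro hB i
    have := hB i.1 i.2
    simpa [fin2cantor, i.2] using this

lemma isOpen_cylFin {r : ℕ} (σ : Fin r → Bool) :
    IsOpen {B : Cantor | ∀ i : Fin r, B i = σ i} := by
  rw [cylFin_eq]; exact isOpen_cyl _ _

lemma forward_inclusion {f g : Cantor → ℝ} {p ε q δ : ℚ} {k : Cantor → Cantor} {r : ℕ}
    {h : (Fin r → Bool) → Bool → Bool} (hk : Continuous k)
    (htrans : ∀ (A : Cantor) (b : Bool), CorrectAnswer g (k A) q δ b →
      CorrectAnswer f A p ε (h (fun i : Fin r => A i) b))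
    (σ : Fin r → Bool) :
    ∀ μ (A : Cantor), (∀ i : Fin r, A i = σ i) → A ∈ derivSeq f p ε μ →
      k A ∈ derivSeq g q δ μ := by
  intro μ
  induction μ using Ordinal.induction with
  | _ μ IH =>
    intro A hσ hA
    rcases Ordinal.zero_or_succ_or_isSuccLimit μ with hz | ⟨ν, rfl⟩ | hlim
    · rw [hz, derivSeq_zero]; trivial
    · rw [mem_derivSeq_succ_iff] at hA ⊢
      obtain ⟨hA1, hA2⟩ := hA
      refine ⟨IH ν (Order.lt_succ ν) A hσ hA1, ?_⟩
      intro U hUo hkU hone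
      set U' : Set Cantor := {B : Cantor | ∀ i : Fin r, B i = σ i} ∩ k ⁻¹' U with hU'
      have hU'o : IsOpen U' := (isOpen_cylFin σ).inter (hUo.preimage hk)
      have hAU' : A ∈ U' := ⟨hσ, hkU⟩
      have key : ∀ c : Bool, (∀ B ∈ derivSeq g q δ ν ∩ U, CorrectAnswer g B q δ c) →
          ∀ B ∈ derivSeq f p ε ν ∩ U', CorrectAnswer f B p ε (h σ c) := by
        intro c hcor B hB
        have hBσ : (fun i : Fin r => B i) = σ := funext fun i => hB.2.1 i
        have hkB : k B ∈ derivSeq g q δ ν ∩ U :=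
          ⟨IH ν (Order.lt_succ ν) B hB.2.1 hB.1, hB.2.2⟩
        have := htrans B c (hcor (k B) hkB)
        rwa [hBσ] at this
      have honef : oneSided f p ε (derivSeq f p ε ν ∩ U') := by
        rcases hone with hio | hio
        · have hcor : ∀ B ∈ derivSeq g q δ ν ∩ U, CorrectAnswer g B q δ true :=
            fun B hB => Or.inl ⟨rfl, hio ⟨B, hB, rfl⟩⟩
          have hkey := key true hcor
          cases hc : h σ true
          · right
            rintro v ⟨B, hB, rfl⟩
            rcases hkey B hB with ⟨habs, _⟩ | ⟨_, hlt⟩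
            · rw [hc] at habs; exact absurd habs (by simp)
            · exact hlt
          · left
            rintro v ⟨B, hB, rfl⟩
            rcases hkey B hB with ⟨_, hlt⟩ | ⟨habs, _⟩
            · exact hlt
            · rw [hc] at habs; exact absurd habs (by simp)
        · have hcor : ∀ B ∈ derivSeq g q δ ν ∩ U, CorrectAnswer g B q δ false :=
            fun B hB => Or.inr ⟨rfl, hio ⟨B, hB, rfl⟩⟩
          have hkey := key false hcor
          cases hc : h σ false
          · right
            rintro v ⟨B, hB, rfl⟩
            rcases hkey B hB with ⟨habs, _⟩ | ⟨_, hlt⟩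
            · rw [hc] at habs; exact absurd habs (by simp)
            · exact hlt
          · left
            rintro v ⟨B, hB, rfl⟩
            rcases hkey B hB with ⟨_, hlt⟩ | ⟨habs, _⟩
            · exact hlt
            · rw [hc] at habs; exact absurd habs (by simp)
      exact hA2 U' hU'o hAU' honef
    · rw [derivSeq_limit hlim] at hA ⊢
      rw [Set.mem_iInter] at hA ⊢
      intro μ'
      exact IH μ'.1 μ'.2 A hσ (hA μ')

lemma forward_direction {f g : Cantor → ℝ} (hg : BaireOne g) (hred : TT1Reducible f g) :
    bourgainRank f ≤ bourgainRank g := by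
  rw [bourgainRank]
  refine Ordinal.iSup_le ?_
  rintro ⟨p, ε, hε⟩
  obtain ⟨k, q, δ, r, h, hk, hδ, htrans⟩ := hred p ε hε
  have hterm : derivSeq g q δ (bAlpha g q δ) = ∅ := derivSeq_bAlpha_empty hg hδ
  have hempty : derivSeq f p ε (bAlpha g q δ) = ∅ := by
    rw [Set.eq_empty_iff_forall_notMem]
    intro A hA
    have := forward_inclusion hk htrans (fun i : Fin r => A i) (bAlpha g q δ) A
      (fun i => rfl) hA
    rw [hterm] at this
    exact this
  calc bAlpha f p ε ≤ bAlpha g q δ := bAlpha_le_of_empty hempty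
    _ ≤ bourgainRank g := Ordinal.le_iSup (fun x : ℚ × {ε : ℚ // 0 < ε} =>
        bAlpha g x.1 x.2.1) (⟨q, ⟨δ, hδ⟩⟩ : ℚ × {ε : ℚ // 0 < ε})

/-! ### Gluing machinery -/

open Set

def CylF {L : ℕ} (σ : Fin L → Bool) : Set Cantor := {B : Cantor | ∀ i : Fin L, B i = σ i}

lemma isClopen_CylF {L : ℕ} (σ : Fin L → Bool) : IsClopen (CylF σ) := by
  rw [CylF, cylFin_eq]; exact isClopen_cyl _ _

lemma mem_CylF_self {L : ℕ} (A : Cantor) : A ∈ CylF (fun i : Fin L => A i) := fun _ => rfl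

lemma oneSided_subset {f : Cantor → ℝ} {p ε : ℚ} {S T : Set Cantor} (h : S ⊆ T) :
    oneSided f p ε T → oneSided f p ε S :=
  Or.imp (fun ht => subset_trans (image_mono (f := f) h) ht)
    (fun ht => subset_trans (image_mono (f := f) h) ht)

lemma glue_pieces {L n : ℕ} {x : Cantor} {C : Set Cantor} (hC : IsClopen C)
    (Φ : Cantor → Cantor → Prop)
    (pieces : ∀ σ : Fin L → Bool, ∃ kσ : Cantor → Cantor, Continuous kσ ∧
      (∀ A, kσ A ∈ cyl x n) ∧ ∀ A ∈ C ∩ CylF σ, Φ A (kσ A)) :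
    ∃ k : Cantor → Cantor, Continuous k ∧ (∀ A, k A ∈ cyl x n) ∧ ∀ A ∈ C, Φ A (k A) := by
  classical
  choose K hKc hKim hKtr using pieces
  refine ⟨fun A => if A ∈ C then K (fun i : Fin L => A i) A else x, ?_, ?_, ?_⟩
  · rw [continuous_iff_continuousAt]
    intro a
    by_cases haC : a ∈ C
    · have hopen : IsOpen (C ∩ CylF (fun i : Fin L => a i)) :=
        hC.2.inter (isClopen_CylF _).2
      have hmem : a ∈ C ∩ CylF (fun i : Fin L => a i) := ⟨haC, mem_CylF_self a⟩
      refine ((hKc (fun i : Fin L => a i)).continuousAt).congr ?_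
      refine Filter.eventuallyEq_of_mem (hopen.mem_nhds hmem) ?_
      intro B hB
      have hBσ : (fun i : Fin L => B i) = (fun i : Fin L => a i) := funext fun i => hB.2 i
      show K (fun i : Fin L => a i) B = if B ∈ C then K (fun i : Fin L => B i) B else x
      rw [if_pos hB.1, hBσ]
    · refine ContinuousAt.congr (f := fun _ => x) continuousAt_const ?_
      refine Filter.eventuallyEq_of_mem ((hC.1.isOpen_compl).mem_nhds haC) ?_
      intro B hB
      show x = if B ∈ C then K (fun i : Fin L => B i) B else x
      rw [if_neg hB]
  · intro A
    by_cases hAC : A ∈ C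
    · simp only [hAC, if_true]; exact hKim _ A
    · simp only [hAC, if_false]; exact mem_cyl_self x n
  · intro A hAC
    simp only [hAC, if_true]
    exact hKtr _ A ⟨hAC, mem_CylF_self A⟩

/-! ### The main construction lemma, by induction on the rank -/

def MotiveA (μ : Ordinal) : Prop :=
  ∀ (f g : Cantor → ℝ) (p ε q δ : ℚ) (C : Set Cantor), IsClopen C →
    C ∩ derivSeq f p ε μ = ∅ → ∀ x ∈ derivSeq g q δ μ, ∀ n : ℕ,
    ∃ k : Cantor → Cantor, Continuous k ∧ (∀ A, k A ∈ cyl x n) ∧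
      ∀ A ∈ C, ((p : ℝ) + ε ≤ f A → (q : ℝ) + δ ≤ g (k A)) ∧
               (f A ≤ (p : ℝ) - ε → g (k A) ≤ (q : ℝ) - δ)

lemma lemB {μ : Ordinal} (hA : MotiveA μ) (f g : Cantor → ℝ) (p ε q δ : ℚ)
    (C : Set Cantor) (hC : IsClopen C)
    (hone : ∀ A ∈ C ∩ derivSeq f p ε μ, f A < (p : ℝ) + ε)
    (z : Cantor) (hz : z ∈ derivSeq g q δ μ) (hgz : g z ≤ (q : ℝ) - δ) (n : ℕ) :
    ∃ k : Cantor → Cantor, Continuous k ∧ (∀ A, k A ∈ cyl z n) ∧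
      ∀ A ∈ C, ((p : ℝ) + ε ≤ f A → (q : ℝ) + δ ≤ g (k A)) ∧
               (f A ≤ (p : ℝ) - ε → g (k A) ≤ (q : ℝ) - δ) := by
  classical
  set P := derivSeq f p ε μ with hPdef
  by_cases hP : P = ∅
  · exact hA f g p ε q δ C hC (by rw [← hPdef, hP, Set.inter_empty]) z hz n
  -- the sets of points at "distance ≥ j" from P
  set W : ℕ → Set Cantor := fun j => {A : Cantor | cyl A j ∩ P = ∅} with hWdef
  have hWmono : ∀ {i j : ℕ}, i ≤ j → W i ⊆ W j := by
    intro i j hij A hAi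
    rw [hWdef, Set.mem_setOf_eq, Set.eq_empty_iff_forall_notMem] at hAi ⊢
    exact fun B hB => hAi B ⟨cyl_anti hij hB.1, hB.2⟩
  have hW0 : ∀ A, A ∉ W 0 := by
    intro A hA0
    rw [hWdef, Set.mem_setOf_eq] at hA0
    have : cyl A 0 = Set.univ := by
      ext B; simp [cyl]
    rw [this, Set.univ_inter] at hA0
    exact hP hA0
  have hWcyl : ∀ {A B : Cantor} {j : ℕ}, A ∈ W j → B ∈ cyl A j → B ∈ W j := by
    intro A B j hAW hB
    rw [hWdef, Set.mem_setOf_eq] at hAW ⊢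
    rwa [cyl_eq_of_mem hB]
  have hWclopen : ∀ j, IsClopen (W j) := by
    intro j
    constructor
    · rw [← isOpen_compl_iff]
      rw [isOpen_iff_mem_nhds]
      intro A hAc
      refine Filter.mem_of_superset ((isOpen_cyl A j).mem_nhds (mem_cyl_self A j)) ?_
      intro B hB hBW
      exact hAc (hWcyl hBW (by rw [cyl_eq_of_mem hB]; exact mem_cyl_self A j))
    · rw [isOpen_iff_mem_nhds]
      intro A hAW
      refine Filter.mem_of_superset ((isOpen_cyl A j).mem_nhds (mem_cyl_self A j)) ?_
      intro B hB
      exact hWcyl hAW hB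
  have hWP : ∀ {A : Cantor} {j : ℕ}, A ∈ W (j + 1) → A ∉ P := by
    intro A j hAW hAP
    rw [hWdef, Set.mem_setOf_eq, Set.eq_empty_iff_forall_notMem] at hAW
    exact hAW A ⟨mem_cyl_self A (j+1), hAP⟩
  -- the ring pieces
  set R : ℕ → Set Cantor := fun j => C ∩ (W (j+1) \ W j) with hRdef
  have hRclopen : ∀ j, IsClopen (R j) :=
    fun j => hC.inter ((hWclopen (j+1)).diff (hWclopen j))
  have hRP : ∀ j, R j ∩ P = ∅ := by
    intro j
    rw [Set.eq_empty_iff_forall_notMem]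
    rintro A ⟨⟨_, hAW, _⟩, hAP⟩
    exact hWP hAW hAP
  have pieces : ∀ j : ℕ, ∃ kj : Cantor → Cantor, Continuous kj ∧
      (∀ A, kj A ∈ cyl z (n + j + 1)) ∧ ∀ A ∈ R j,
        ((p : ℝ) + ε ≤ f A → (q : ℝ) + δ ≤ g (kj A)) ∧
        (f A ≤ (p : ℝ) - ε → g (kj A) ≤ (q : ℝ) - δ) :=
    fun j => hA f g p ε q δ (R j) (hRclopen j) (hRP j) z hz (n + j + 1)
  choose K hKc hKim hKtr using pieces
  have hfind : ∀ {A : Cantor} (h : ∃ j, A ∈ W (j + 1)), A ∈ C → A ∈ R (Nat.find h) := by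
    intro A h hAC
    refine ⟨hAC, Nat.find_spec h, ?_⟩
    cases hj : Nat.find h with
    | zero => exact hW0 A
    | succ j' =>
      have := Nat.find_min h (m := j') (by omega)
      exact this
  refine ⟨fun A => if h : A ∈ C ∧ ∃ j, A ∈ W (j + 1) then K (Nat.find h.2) A else z,
    ?_, ?_, ?_⟩
  · rw [continuous_iff_continuousAt]
    intro a
    by_cases haC : a ∈ C
    · by_cases haE : ∃ j, a ∈ W (j + 1)
      · -- on the open ring `R (Nat.find haE)` the map agrees with a continuous one
        set j := Nat.find haE with hjdef
        have haR : a ∈ R j := hfind haE haC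
        refine (hKc j).continuousAt.congr ?_
        refine Filter.eventuallyEq_of_mem (((hRclopen j).2).mem_nhds haR) ?_
        rintro B ⟨hBC, hBW1, hBW0⟩
        have hBE : ∃ i, B ∈ W (i + 1) := ⟨j, hBW1⟩
        have hBfind : Nat.find hBE = j := by
          rw [Nat.find_eq_iff]
          refine ⟨hBW1, ?_⟩
          intro m hm hBm
          exact hBW0 (hWmono (by omega) hBm)
        show K j B = if h : B ∈ C ∧ ∃ j, B ∈ W (j + 1) then K (Nat.find h.2) B else z
        rw [dif_pos (⟨hBC, hBE⟩ : B ∈ C ∧ ∃ i, B ∈ W (i + 1))]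
        exact congrArg (fun m => K m B) hBfind.symm
      · -- `a` lies in `C ∩ P`; continuity towards `z` at `a`
        have haP : a ∈ P := by
          by_contra haP
          have : a ∈ (Pᶜ : Set Cantor) := haP
          obtain ⟨m, hm⟩ := exists_cyl_subset (isClosed_derivSeq μ).isOpen_compl this
          have hmW : a ∈ W m := by
            rw [hWdef, Set.mem_setOf_eq, Set.eq_empty_iff_forall_notMem]
            exact fun B hB => hm hB.1 hB.2
          cases m with
          | zero => exact hW0 a hmW
          | succ m' => exact haE ⟨m', hmW⟩
        have hka : (if h : a ∈ C ∧ ∃ j, a ∈ W (j + 1) then K (Nat.find h.2) a else z) = z := by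
          rw [dif_neg]
          rintro ⟨_, hE⟩
          exact haE hE
        refine continuousAt_of_cyl ?_
        intro M
        refine ⟨M, ?_⟩
        intro B hB
        rw [hka]
        by_cases hBc : B ∈ C ∧ ∃ j, B ∈ W (j + 1)
        · have hBR := hfind hBc.2 hBc.1
          have hjM : M ≤ Nat.find hBc.2 := by
            by_contra hlt
            push_neg at hlt
            have hBW : B ∈ W M := hWmono (by omega) (Nat.find_spec hBc.2)
            rw [hWdef, Set.mem_setOf_eq, cyl_eq_of_mem hB,
              Set.eq_empty_iff_forall_notMem] at hBW
            exact hBW a ⟨mem_cyl_self a M, haP⟩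
          simp only [dif_pos hBc]
          exact cyl_anti (by omega) (hKim (Nat.find hBc.2) B)
        · simp only [dif_neg hBc]
          exact mem_cyl_self z M
    · refine ContinuousAt.congr (f := fun _ => z) continuousAt_const ?_
      refine Filter.eventuallyEq_of_mem ((hC.1.isOpen_compl).mem_nhds haC) ?_
      intro B hB
      show z = if h : B ∈ C ∧ ∃ j, B ∈ W (j + 1) then K (Nat.find h.2) B else z
      rw [dif_neg]
      rintro ⟨hBC, _⟩
      exact hB hBC
  · intro A
    by_cases hAc : A ∈ C ∧ ∃ j, A ∈ W (j + 1)
    · simp only [dif_pos hAc]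
      exact cyl_anti (by omega) (hKim (Nat.find hAc.2) A)
    · simp only [dif_neg hAc]
      exact mem_cyl_self z n
  · intro A hAC
    by_cases hAc : A ∈ C ∧ ∃ j, A ∈ W (j + 1)
    · simp only [dif_pos hAc]
      exact hKtr (Nat.find hAc.2) A (hfind hAc.2 hAC)
    · simp only [dif_neg hAc]
      have hAP : A ∈ P := by
        by_contra hAP
        obtain ⟨m, hm⟩ := exists_cyl_subset (isClosed_derivSeq μ).isOpen_compl hAP
        have hmW : A ∈ W m := by
          rw [hWdef, Set.mem_setOf_eq, Set.eq_empty_iff_forall_notMem]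
          exact fun B hB => hm hB.1 hB.2
        cases m with
        | zero => exact hW0 A hmW
        | succ m' => exact hAc ⟨hAC, ⟨m', hmW⟩⟩
      constructor
      · intro hge
        exact absurd hge (not_le.mpr (hone A ⟨hAC, hAP⟩))
      · intro _
        exact hgz

lemma motiveA_all : ∀ μ, MotiveA μ := by
  intro μ
  induction μ using Ordinal.induction with
  | _ μ IH =>
  rcases Ordinal.zero_or_succ_or_isSuccLimit μ with hz | ⟨ν, hsucc⟩ | hlim
  · subst hz
    intro f g p ε q δ C hC hCP x hx n
    refine ⟨fun _ => x, continuous_const, fun _ => mem_cyl_self x n, ?_⟩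
    intro A hAC
    rw [derivSeq_zero, Set.inter_univ] at hCP
    exact absurd (hCP ▸ hAC) (Set.notMem_empty A)
  · subst hsucc
    intro f g p ε q δ C hC hCP x hx n
    have hIH : MotiveA ν := IH ν (Order.lt_succ ν)
    rw [mem_derivSeq_succ_iff] at hx
    obtain ⟨hxν, hxnr⟩ := hx
    have hnone := hxnr (cyl x n) (isOpen_cyl x n) (mem_cyl_self x n)
    rw [oneSided] at hnone
    push_neg at hnone
    obtain ⟨h1, h2⟩ := hnone
    obtain ⟨vy, hvy, hvy2⟩ := Set.not_subset.mp h1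
    obtain ⟨y, hyQ, rfl⟩ := hvy
    have hgy : (q : ℝ) + δ ≤ g y := not_lt.mp (by simpa using hvy2)
    obtain ⟨vz, hvz, hvz2⟩ := Set.not_subset.mp h2
    obtain ⟨z, hzQ, rfl⟩ := hvz
    have hgz : g z ≤ (q : ℝ) - δ := not_lt.mp (by simpa using hvz2)
    -- `y, z ∈ Q^ν ∩ cyl x n` with `g y ≥ q + δ` and `g z ≤ q - δ`
    have hycyl : y ∈ cyl x n := hyQ.2
    have hzcyl : z ∈ cyl x n := hzQ.2
    -- covering the compact set `C ∩ P^ν` by one-sided cylinders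
    have hcov : ∀ A ∈ C ∩ derivSeq f p ε ν, ∃ m : ℕ,
        oneSided f p ε (derivSeq f p ε ν ∩ cyl A m) := by
      intro A hA
      have hAn : A ∉ derivSeq f p ε (Order.succ ν) := by
        intro hmem
        rw [Set.eq_empty_iff_forall_notMem] at hCP
        exact hCP A ⟨hA.1, hmem⟩
      rw [mem_derivSeq_succ_iff] at hAn
      push_neg at hAn
      obtain ⟨U, hUo, hAU, hone⟩ := hAn hA.2
      obtain ⟨m, hm⟩ := exists_cyl_subset hUo hAU
      exact ⟨m, oneSided_subset (Set.inter_subset_inter_right _ hm) hone⟩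
    choose! m hmone using hcov
    set Kset := C ∩ derivSeq f p ε ν with hKset
    have hKcpt : IsCompact Kset := (hC.1.inter (isClosed_derivSeq ν)).isCompact
    obtain ⟨t, htsub, htfin, htcov⟩ := hKcpt.elim_finite_subcover_image
      (b := Kset) (c := fun A => cyl A (m A)) (fun A _ => isOpen_cyl A (m A))
      (fun A hA => Set.mem_biUnion hA (mem_cyl_self A (m A)))
    set L := htfin.toFinset.sup m with hL
    have hLm : ∀ A ∈ t, m A ≤ L := fun A hA => Finset.le_sup (htfin.mem_toFinset.mpr hA)
    have pieces : ∀ σ : Fin L → Bool, ∃ kσ : Cantor → Cantor, Continuous kσ ∧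
        (∀ A, kσ A ∈ cyl x n) ∧ ∀ A ∈ C ∩ CylF σ,
          (((p : ℝ) + ε ≤ f A → (q : ℝ) + δ ≤ g (kσ A)) ∧
           (f A ≤ (p : ℝ) - ε → g (kσ A) ≤ (q : ℝ) - δ)) := by
      intro σ
      by_cases hmeet : (CylF σ ∩ Kset).Nonempty
      · obtain ⟨A0, hA0σ, hA0K⟩ := hmeet
        have hA0U : A0 ∈ ⋃ A ∈ t, cyl A (m A) := htcov hA0K
        rw [Set.mem_iUnion₂] at hA0U
        obtain ⟨A1, hA1t, hA0c⟩ := hA0U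
        have hsubcyl : CylF σ ⊆ cyl A1 (m A1) := by
          intro B hB i hi
          have him : i < L := lt_of_lt_of_le hi (hLm A1 hA1t)
          have hBi : B i = σ ⟨i, him⟩ := hB ⟨i, him⟩
          have hA0i : A0 i = σ ⟨i, him⟩ := hA0σ ⟨i, him⟩
          rw [hBi, ← hA0i]
          exact hA0c i hi
        have honeσ : oneSided f p ε (derivSeq f p ε ν ∩ CylF σ) :=
          oneSided_subset (Set.inter_subset_inter_right _ hsubcyl) (hmone A1 (htsub hA1t))
        rcases honeσ with hio | hio
        · -- the `f < p + ε` side : use the low witness `z`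
          obtain ⟨k, hk1, hk2, hk3⟩ := lemB hIH f g p ε q δ (C ∩ CylF σ)
            (hC.inter (isClopen_CylF σ))
            (by
              rintro A ⟨hA1, hA2⟩
              have := hio ⟨A, ⟨hA2, hA1.2⟩, rfl⟩
              simpa using this)
            z hzQ.1 hgz n
          exact ⟨k, hk1, fun A => (cyl_eq_of_mem hzcyl) ▸ hk2 A, hk3⟩
        · -- the `f > p - ε` side : mirror both functions and use the high witness `y`
          obtain ⟨k, hk1, hk2, hk3⟩ := lemB hIH (fun A => -(f A)) (fun A => -(g A))
            (-p) ε (-q) δ (C ∩ CylF σ) (hC.inter (isClopen_CylF σ))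
            (by
              rw [derivSeq_neg]
              rintro A ⟨hA1, hA2⟩
              have := hio ⟨A, ⟨hA2, hA1.2⟩, rfl⟩
              simp only [Set.mem_Ioi] at this
              push_cast
              linarith)
            y (by rw [derivSeq_neg]; exact hyQ.1)
            (by push_cast; linarith) n
          refine ⟨k, hk1, fun A => (cyl_eq_of_mem hycyl) ▸ hk2 A, ?_⟩
          intro A hA
          obtain ⟨ht1, ht2⟩ := hk3 A hA
          constructor
          · intro hge
            have := ht2 (by push_cast; linarith)
            push_cast at this
            linarith
          · intro hle
            have := ht1 (by push_cast; linarith)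
            push_cast at this
            linarith
      · refine hIH f g p ε q δ (C ∩ CylF σ) (hC.inter (isClopen_CylF σ)) ?_ x hxν n
        rw [Set.not_nonempty_iff_eq_empty] at hmeet
        rw [Set.eq_empty_iff_forall_notMem] at hmeet ⊢
        rintro A ⟨⟨hA1, hA2⟩, hA3⟩
        exact hmeet A ⟨hA2, hA1, hA3⟩
    exact glue_pieces hC (fun A yv => (((p : ℝ) + ε ≤ f A → (q : ℝ) + δ ≤ g yv) ∧
      (f A ≤ (p : ℝ) - ε → g yv ≤ (q : ℝ) - δ))) pieces
  · intro f g p ε q δ C hC hCP x hx n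
    have hex : ∃ ν, ν < μ ∧ C ∩ derivSeq f p ε ν = ∅ := by
      by_contra hcon
      push_neg at hcon
      haveI : Nonempty {ν : Ordinal // ν < μ} := ⟨⟨0, hlim.pos⟩⟩
      have hne : ∀ ν : {ν : Ordinal // ν < μ}, (C ∩ derivSeq f p ε ν.1).Nonempty :=
        fun ν => hcon ν.1 ν.2
      have hdir : Directed (· ⊇ ·) (fun ν : {ν : Ordinal // ν < μ} =>
          C ∩ derivSeq f p ε ν.1) := by
        intro ν₁ ν₂
        refine ⟨⟨max ν₁.1 ν₂.1, max_lt ν₁.2 ν₂.2⟩, ?_, ?_⟩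
        · exact Set.inter_subset_inter_right _ (derivSeq_antitone (le_max_left _ _))
        · exact Set.inter_subset_inter_right _ (derivSeq_antitone (le_max_right _ _))
      have hnonempty := IsCompact.nonempty_iInter_of_directed_nonempty_isCompact_isClosed
        _ hdir hne
        (fun ν => ((hC.1.inter (isClosed_derivSeq ν.1)).isCompact))
        (fun ν => hC.1.inter (isClosed_derivSeq ν.1))
      obtain ⟨a, ha⟩ := hnonempty
      rw [Set.mem_iInter] at ha
      have haC : a ∈ C := (ha ⟨0, hlim.pos⟩).1
      have haP : a ∈ derivSeq f p ε μ := by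
        rw [derivSeq_limit hlim, Set.mem_iInter]
        exact fun ν => (ha ν).2
      rw [Set.eq_empty_iff_forall_notMem] at hCP
      exact hCP a ⟨haC, haP⟩
    obtain ⟨ν, hνμ, hCν⟩ := hex
    exact IH ν hνμ f g p ε q δ C hC hCν x (derivSeq_antitone hνμ.le hx) n

/-! ### Narrowing the band -/

lemma derivSeq_band_mono {g : Cantor → ℝ} {q δ c d : ℚ}
    (h1 : (q : ℝ) - δ ≤ (c : ℝ) - d) (h2 : (c : ℝ) + d ≤ (q : ℝ) + δ) :
    ∀ μ, derivSeq g q δ μ ⊆ derivSeq g c d μ := by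
  intro μ
  induction μ using Ordinal.induction with
  | _ μ IH =>
    rcases Ordinal.zero_or_succ_or_isSuccLimit μ with hz | ⟨ν, rfl⟩ | hlim
    · rw [hz, derivSeq_zero, derivSeq_zero]
    · intro x hx
      rw [mem_derivSeq_succ_iff] at hx ⊢
      obtain ⟨hx1, hx2⟩ := hx
      refine ⟨IH ν (Order.lt_succ ν) hx1, ?_⟩
      intro U hUo hxU hone
      refine hx2 U hUo hxU ?_
      have hsub : derivSeq g q δ ν ∩ U ⊆ derivSeq g c d ν ∩ U :=
        Set.inter_subset_inter_left _ (IH ν (Order.lt_succ ν))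
      have hone' := oneSided_subset hsub hone
      rcases hone' with hio | hio
      · left
        exact subset_trans hio (Set.Iio_subset_Iio h2)
      · right
        exact subset_trans hio (Set.Ioi_subset_Ioi h1)
    · intro x hx
      rw [derivSeq_limit hlim] at hx ⊢
      rw [Set.mem_iInter] at hx ⊢
      exact fun ν => IH ν.1 ν.2 (hx ν)

lemma retune {g : Cantor → ℝ} {q δ : ℚ} (hδ : 0 < δ) {β : Ordinal} (x₀ : Cantor)
    (hx₀ : x₀ ∈ derivSeq g q δ β) :
    ∃ (c d : ℚ) (w : Cantor), 0 < d ∧ w ∈ derivSeq g c d β ∧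
      ((c : ℝ) + d ≤ g w ∨ g w ≤ (c : ℝ) - d) := by
  by_cases hhi : (q : ℝ) + δ ≤ g x₀
  · exact ⟨q, δ, x₀, hδ, hx₀, Or.inl hhi⟩
  by_cases hlo : g x₀ ≤ (q : ℝ) - δ
  · exact ⟨q, δ, x₀, hδ, hx₀, Or.inr hlo⟩
  push_neg at hhi hlo
  obtain ⟨r1, hr1a, hr1b⟩ := exists_rat_btwn hlo
  obtain ⟨r2, hr2a, hr2b⟩ := exists_rat_btwn hr1b
  have hr12 : r1 < r2 := by exact_mod_cast hr2a
  refine ⟨(r1 + r2) / 2, (r2 - r1) / 2, x₀, by linarith, ?_, ?_⟩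
  · refine derivSeq_band_mono ?_ ?_ β hx₀
    · have : ((r1 + r2) / 2 - (r2 - r1) / 2 : ℚ) = r1 := by ring
      push_cast [this]
      push_cast at hr1a ⊢
      linarith
    · have : ((r1 + r2) / 2 + (r2 - r1) / 2 : ℚ) = r2 := by ring
      push_cast [this]
      linarith
  · left
    have : ((r1 + r2) / 2 + (r2 - r1) / 2 : ℚ) = r2 := by ring
    push_cast [this]
    linarith

/-! ### The core construction -/

lemma coreLemma (f g : Cantor → ℝ) (p ε q δ : ℚ) (β : Ordinal)
    (hP : derivSeq f p ε (Order.succ β) = ∅) (w : Cantor)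
    (hw : w ∈ derivSeq g q δ β) (hhigh : (q : ℝ) + δ ≤ g w) :
    ∃ (k : Cantor → Cantor) (r : ℕ) (h : (Fin r → Bool) → Bool → Bool), Continuous k ∧
      ∀ (A : Cantor) (b : Bool), CorrectAnswer g (k A) q δ b →
        CorrectAnswer f A p ε (h (fun i : Fin r => A i) b) := by
  classical
  have hIH : MotiveA β := motiveA_all β
  have hcov : ∀ A ∈ derivSeq f p ε β, ∃ m : ℕ,
      oneSided f p ε (derivSeq f p ε β ∩ cyl A m) := by
    intro A hA
    have hAn : A ∉ derivSeq f p ε (Order.succ β) := by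
      rw [hP]; exact Set.notMem_empty A
    rw [mem_derivSeq_succ_iff] at hAn
    push_neg at hAn
    obtain ⟨U, hUo, hAU, hone⟩ := hAn hA
    obtain ⟨m, hm⟩ := exists_cyl_subset hUo hAU
    exact ⟨m, oneSided_subset (Set.inter_subset_inter_right _ hm) hone⟩
  choose! m hmone using hcov
  set Kset := derivSeq f p ε β with hKset
  have hKcpt : IsCompact Kset := (isClosed_derivSeq β).isCompact
  obtain ⟨t, htsub, htfin, htcov⟩ := hKcpt.elim_finite_subcover_image
    (b := Kset) (c := fun A => cyl A (m A)) (fun A _ => isOpen_cyl A (m A))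
    (fun A hA => Set.mem_biUnion hA (mem_cyl_self A (m A)))
  set L := htfin.toFinset.sup m with hL
  have hLm : ∀ A ∈ t, m A ≤ L := fun A hA => Finset.le_sup (htfin.mem_toFinset.mpr hA)
  have pieces : ∀ σ : Fin L → Bool, ∃ (kσ : Cantor → Cantor) (mode : Bool),
      Continuous kσ ∧ ∀ A ∈ CylF σ,
        (((p : ℝ) + ε ≤ f A →
          (if mode = true then (q : ℝ) + δ ≤ g (kσ A) else g (kσ A) ≤ (q : ℝ) - δ)) ∧
         (f A ≤ (p : ℝ) - ε →
          (if mode = true then g (kσ A) ≤ (q : ℝ) - δ else (q : ℝ) + δ ≤ g (kσ A)))) := by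
    intro σ
    by_cases hmeet : (CylF σ ∩ Kset).Nonempty
    · obtain ⟨A0, hA0σ, hA0K⟩ := hmeet
      have hA0U : A0 ∈ ⋃ A ∈ t, cyl A (m A) := htcov hA0K
      rw [Set.mem_iUnion₂] at hA0U
      obtain ⟨A1, hA1t, hA0c⟩ := hA0U
      have hsubcyl : CylF σ ⊆ cyl A1 (m A1) := by
        intro B hB i hi
        have him : i < L := lt_of_lt_of_le hi (hLm A1 hA1t)
        have hBi : B i = σ ⟨i, him⟩ := hB ⟨i, him⟩
        have hA0i : A0 i = σ ⟨i, him⟩ := hA0σ ⟨i, him⟩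
        rw [hBi, ← hA0i]
        exact hA0c i hi
      have honeσ : oneSided f p ε (derivSeq f p ε β ∩ CylF σ) :=
        oneSided_subset (Set.inter_subset_inter_right _ hsubcyl) (hmone A1 (htsub hA1t))
      rcases honeσ with hio | hio
      · -- `f < p + ε` on the cylinder's kernel : negation mode, using the high witness
        obtain ⟨k, hk1, _, hk3⟩ := lemB hIH f (fun A => -(g A)) p ε (-q) δ (CylF σ)
          (isClopen_CylF σ)
          (by
            rintro A ⟨hA1, hA2⟩
            have := hio ⟨A, ⟨hA2, hA1⟩, rfl⟩
            simpa using this)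
          w (by rw [derivSeq_neg]; exact hw)
          (by push_cast; linarith) 0
        refine ⟨k, false, hk1, ?_⟩
        intro A hA
        obtain ⟨ht1, ht2⟩ := hk3 A hA
        simp only [Bool.false_eq_true, if_false]
        constructor
        · intro hge
          have := ht1 hge
          push_cast at this
          linarith
        · intro hle
          have := ht2 hle
          push_cast at this
          linarith
      · -- `f > p - ε` on the cylinder's kernel : identity mode
        obtain ⟨k, hk1, _, hk3⟩ := lemB hIH (fun A => -(f A)) (fun A => -(g A))
          (-p) ε (-q) δ (CylF σ) (isClopen_CylF σ)
          (by
            rw [derivSeq_neg]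
            rintro A ⟨hA1, hA2⟩
            have := hio ⟨A, ⟨hA2, hA1⟩, rfl⟩
            simp only [Set.mem_Ioi] at this
            push_cast
            linarith)
          w (by rw [derivSeq_neg]; exact hw)
          (by push_cast; linarith) 0
        refine ⟨k, true, hk1, ?_⟩
        intro A hA
        obtain ⟨ht1, ht2⟩ := hk3 A hA
        simp only [if_true]
        constructor
        · intro hge
          have := ht2 (by push_cast; linarith)
          push_cast at this
          linarith
        · intro hle
          have := ht1 (by push_cast; linarith)
          push_cast at this
          linarith
    · -- the cylinder misses `P^β` : identity mode via the main lemma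
      have hempty : CylF σ ∩ derivSeq f p ε β = ∅ := by
        rw [Set.not_nonempty_iff_eq_empty] at hmeet
        exact hmeet
      obtain ⟨k, hk1, _, hk3⟩ := hIH f g p ε q δ (CylF σ) (isClopen_CylF σ) hempty w hw 0
      refine ⟨k, true, hk1, ?_⟩
      intro A hA
      obtain ⟨ht1, ht2⟩ := hk3 A hA
      simp only [if_true]
      exact ⟨ht1, ht2⟩
  choose K M hKc hKtr using pieces
  refine ⟨fun A => K (fun i : Fin L => A i) A, L,
    fun σ b => if M σ = true then b else !b, ?_, ?_⟩
  · rw [continuous_iff_continuousAt]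
    intro a
    refine ((hKc (fun i : Fin L => a i)).continuousAt).congr ?_
    refine Filter.eventuallyEq_of_mem (((isClopen_CylF (fun i : Fin L => a i)).2).mem_nhds
      (mem_CylF_self a)) ?_
    intro B hB
    have hBσ : (fun i : Fin L => B i) = (fun i : Fin L => a i) := funext fun i => hB i
    show K (fun i : Fin L => a i) B = K (fun i : Fin L => B i) B
    rw [hBσ]
  · intro A b hb
    set σ := fun i : Fin L => A i with hσ
    obtain ⟨ht1, ht2⟩ := hKtr σ A (mem_CylF_self A)
    rcases hb with ⟨rfl, hlt⟩ | ⟨rfl, hgt⟩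
    · cases hM : M σ
      · -- mode = neg, answer true for g ⇒ answer false for f
        simp only [hM, Bool.false_eq_true, if_false] at ht1 ht2
        right
        refine ⟨by simp [hM], ?_⟩
        by_contra hcon
        push_neg at hcon
        have := ht2 hcon
        linarith
      · simp only [hM, if_true] at ht1 ht2
        left
        refine ⟨by simp [hM], ?_⟩
        by_contra hcon
        push_neg at hcon
        have := ht1 hcon
        linarith
    · cases hM : M σ
      · simp only [hM, Bool.false_eq_true, if_false] at ht1 ht2
        left
        refine ⟨by simp [hM], ?_⟩
        by_contra hcon
        push_neg at hcon
        have := ht1 hcon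
        linarith
      · simp only [hM, if_true] at ht1 ht2
        right
        refine ⟨by simp [hM], ?_⟩
        by_contra hcon
        push_neg at hcon
        have := ht2 hcon
        linarith

/-! ### The backward direction -/

lemma backward_direction {f g : Cantor → ℝ} (hf : BaireOne f) (hg : BaireOne g)
    (hrank : bourgainRank f ≤ bourgainRank g) : TT1Reducible f g := by
  intro p ε hε
  obtain ⟨β, hβ⟩ := bAlpha_is_succ (p := p) hf hε
  have hPempty : derivSeq f p ε (Order.succ β) = ∅ := by
    rw [← hβ]; exact derivSeq_bAlpha_empty hf hε
  have hexists : ∃ (q δ : ℚ), 0 < δ ∧ Order.succ β ≤ bAlpha g q δ := by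
    by_contra hcon
    push_neg at hcon
    have hub : bourgainRank g ≤ β := by
      rw [bourgainRank]
      refine Ordinal.iSup_le ?_
      rintro ⟨q, δ, hδ⟩
      exact Order.lt_succ_iff.mp (hcon q δ hδ)
    have hlb : Order.succ β ≤ bourgainRank f := by
      rw [← hβ, bourgainRank]
      exact Ordinal.le_iSup (fun x : ℚ × {ε : ℚ // 0 < ε} => bAlpha f x.1 x.2.1)
        (⟨p, ⟨ε, hε⟩⟩ : ℚ × {ε : ℚ // 0 < ε})
    have : Order.succ β ≤ β := le_trans hlb (le_trans hrank hub)
    exact absurd this (Order.succ_le_iff.not.mpr (lt_irrefl β).elim)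
  obtain ⟨q, δ, hδ, hle⟩ := hexists
  have hβlt : β < bAlpha g q δ := Order.succ_le_iff.mp hle
  obtain ⟨x₀, hx₀⟩ := derivSeq_nonempty_of_lt_bAlpha hβlt
  obtain ⟨c, d, w, hd, hw, hside⟩ := retune hδ x₀ hx₀
  rcases hside with hhigh | hlow
  · obtain ⟨k, r, h, hk, htr⟩ := coreLemma f g p ε c d β hPempty w hw hhigh
    exact ⟨k, c, d, r, h, hk, hd, htr⟩
  · obtain ⟨k, r, h', hk, htr⟩ := coreLemma f (fun A => -(g A)) p ε (-c) d β hPempty w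
      (by rw [derivSeq_neg]; exact hw) (by push_cast; linarith)
    refine ⟨k, c, d, r, fun σ b => h' σ (!b), hk, hd, ?_⟩
    intro A b hb
    have hb' : CorrectAnswer (fun A => -(g A)) (k A) (-c) d (!b) := by
      rcases hb with ⟨rfl, hlt⟩ | ⟨rfl, hgt⟩
      · right
        refine ⟨rfl, ?_⟩
        show ((-c : ℚ) : ℝ) - (d : ℝ) < -(g (k A))
        push_cast
        linarith
      · left
        refine ⟨rfl, ?_⟩
        show -(g (k A)) < ((-c : ℚ) : ℝ) + (d : ℝ)
        push_cast
        linarith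
    exact htr A (!b) hb'


/-- For Baire 1 functions `f, g`, one has `f ≤_tt1 g` iff `|f|_α ≤ |g|_α`. -/
theorem tt1Reducible_iff_bourgainRank_le (f g : Cantor → ℝ) (hf : BaireOne f)
    (hg : BaireOne g) : TT1Reducible f g ↔ bourgainRank f ≤ bourgainRank g :=
  ⟨fun hred => forward_direction hg hred, fun hrank => backward_direction hf hg hrank⟩
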